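/- arXiv:2103.04737 — 2 statements merged into one kernel-verified Lean document; each statement's English description precedes it below -/
import Mathlib

section
/- Let a ∈ Δ_n^*, b ∈ Δ_m^*, g ∈ Δ_r^*, C ∈ ℝ^{n×m}, ε ≥ 0 and N ≥ 1. Set L_ε := sqrt( 2( ‖C‖₂² ‖Diag(1/g)‖₂² + ε² ) ), where ‖·‖₂ denotes the spectral norm (so ‖Diag(1/g)‖₂ = 1/min_i g_i), and γ := 1/(2 L_ε). Let (Q₀, R₀) ∈ Π_{a,g} × Π_{b,g} have strictly positive entries and define the mirror-descent iterates x_{k+1} := G_ε(x_k, γ) for k ≥ 0, starting from x₀ := (Q₀, R₀) (the iterates remain entrywise strictly positive, so the recursion is well defined). Then min_{0 ≤ k ≤ N−1} Δ_ε(x_k, γ) ≤ 4 L_ε D₀ / N, where D₀ := f_ε(Q₀, R₀) − LOT_{r,g,ε}. -/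
open Matrix Finset Real
open scoped RealInnerProductSpace

noncomputable section

/-- Real matrices indexed by `Fin n × Fin m`. -/
abbrev Mat (n m : ℕ) : Type := Matrix (Fin n) (Fin m) ℝ

/-- Triples `(Q, R, g)` as in the low-rank OT factorization. -/
abbrev LRTriple (n m r : ℕ) : Type := Mat n r × Mat m r × (Fin r → ℝ)

/-- Pairs `(Q, R)` (fixed middle marginal `g`). -/
abbrev LRPair (n m r : ℕ) : Type := Mat n r × Mat m r

/-- The interior of the probability simplex Δ_n^*: strictly positive entries summing to 1. -/
def posSimplex (n : ℕ) : Set (Fin n → ℝ) := {a | (∀ i, 0 < a i) ∧ ∑ i, a i = 1}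

/-- Frobenius inner product ⟨C, P⟩ = Σ_{ij} C_ij P_ij. -/
def frobInner {n m : ℕ} (C P : Mat n m) : ℝ := ∑ i, ∑ j, C i j * P i j

/-- Entropy H(P) = −Σ_{ij} P_ij (log P_ij − 1) (with 0 log 0 = 0, as `Real.log 0 = 0`). -/
def matH {n m : ℕ} (P : Mat n m) : ℝ := -∑ i, ∑ j, P i j * (Real.log (P i j) - 1)

/-- Entropy of a vector. -/
def vecH {r : ℕ} (g : Fin r → ℝ) : ℝ := -∑ i, g i * (Real.log (g i) - 1)

/-- Kullback–Leibler divergence KL(P,Q) = Σ_{ij} P_ij (log(P_ij/Q_ij) − 1). -/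
def matKL {n m : ℕ} (P Q : Mat n m) : ℝ := ∑ i, ∑ j, P i j * (Real.log (P i j / Q i j) - 1)

/-- Kullback–Leibler divergence of vectors. -/
def vecKL {r : ℕ} (p q : Fin r → ℝ) : ℝ := ∑ i, p i * (Real.log (p i / q i) - 1)

/-- KL divergence on triples, summing over the three components. -/
def tripleKL {n m r : ℕ} (x y : LRTriple n m r) : ℝ :=
  matKL x.1 y.1 + matKL x.2.1 y.2.1 + vecKL x.2.2 y.2.2

/-- KL divergence on pairs, summing over the two components. -/
def pairKL {n m r : ℕ} (x y : LRPair n m r) : ℝ := matKL x.1 y.1 + matKL x.2 y.2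

/-- Euclidean inner product on triples. -/
def tripleInner {n m r : ℕ} (x y : LRTriple n m r) : ℝ :=
  frobInner x.1 y.1 + frobInner x.2.1 y.2.1 + ∑ i, x.2.2 i * y.2.2 i

/-- Euclidean inner product on pairs. -/
def pairInner {n m r : ℕ} (x y : LRPair n m r) : ℝ := frobInner x.1 y.1 + frobInner x.2 y.2

/-- Squared Euclidean norm of a triple (Frobenius on matrix blocks). -/
def tripleNormSq {n m r : ℕ} (x : LRTriple n m r) : ℝ :=
  (∑ i, ∑ j, (x.1 i j) ^ 2) + (∑ i, ∑ j, (x.2.1 i j) ^ 2) + ∑ i, (x.2.2 i) ^ 2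

/-- Squared Euclidean norm of a pair (Frobenius on matrix blocks). -/
def pairNormSq {n m r : ℕ} (x : LRPair n m r) : ℝ :=
  (∑ i, ∑ j, (x.1 i j) ^ 2) + (∑ i, ∑ j, (x.2 i j) ^ 2)

/-- The transport polytope Π_{a,b} of couplings with marginals `a` and `b`. -/
def couplings {n m : ℕ} (a : Fin n → ℝ) (b : Fin m → ℝ) : Set (Mat n m) :=
  {P | (∀ i j, 0 ≤ P i j) ∧ (∀ i, ∑ j, P i j = a i) ∧ (∀ j, ∑ i, P i j = b j)}

/-- The nonnegative rank: smallest `q` such that `M` is a sum of `q` nonnegative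
rank-one matrices. -/
def nonnegRank {n m : ℕ} (M : Mat n m) : ℕ :=
  sInf {q : ℕ | ∃ f : Fin q → Mat n m,
    (∀ i, (f i).rank = 1 ∧ ∀ k l, 0 ≤ f i k l) ∧ M = ∑ i, f i}

/-- Π_{a,b}(r): couplings with nonnegative rank at most `r`. -/
def couplingsRank {n m : ℕ} (a : Fin n → ℝ) (b : Fin m → ℝ) (r : ℕ) : Set (Mat n m) :=
  {P | P ∈ couplings a b ∧ nonnegRank P ≤ r}

/-- 𝒞₁(a,b,r): `Q, R` nonnegative with row sums `a`, `b`, and `g > 0`. -/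
def C1set {n m : ℕ} (a : Fin n → ℝ) (b : Fin m → ℝ) (r : ℕ) : Set (LRTriple n m r) :=
  {x | (∀ i j, 0 ≤ x.1 i j) ∧ (∀ i j, 0 ≤ x.2.1 i j) ∧ (∀ i, 0 < x.2.2 i) ∧
    (∀ i, ∑ j, x.1 i j = a i) ∧ (∀ i, ∑ j, x.2.1 i j = b i)}

/-- The closure of 𝒞₁(a,b,r): as 𝒞₁ but only `g ≥ 0`. -/
def C1barSet {n m : ℕ} (a : Fin n → ℝ) (b : Fin m → ℝ) (r : ℕ) : Set (LRTriple n m r) :=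
  {x | (∀ i j, 0 ≤ x.1 i j) ∧ (∀ i j, 0 ≤ x.2.1 i j) ∧ (∀ i, 0 ≤ x.2.2 i) ∧
    (∀ i, ∑ j, x.1 i j = a i) ∧ (∀ i, ∑ j, x.2.1 i j = b i)}

/-- 𝒞₁(a,b,r,α): as 𝒞₁ but with the lower bound `g ≥ α`. -/
def C1setAlpha {n m : ℕ} (a : Fin n → ℝ) (b : Fin m → ℝ) (r : ℕ) (α : ℝ) :
    Set (LRTriple n m r) :=
  {x | (∀ i j, 0 ≤ x.1 i j) ∧ (∀ i j, 0 ≤ x.2.1 i j) ∧ (∀ i, α ≤ x.2.2 i) ∧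
    (∀ i, ∑ j, x.1 i j = a i) ∧ (∀ i, ∑ j, x.2.1 i j = b i)}

/-- 𝒞₂(r): `Q, R, g` nonnegative with both column sums equal to `g`. -/
def C2set {n m : ℕ} (r : ℕ) : Set (LRTriple n m r) :=
  {x | (∀ i j, 0 ≤ x.1 i j) ∧ (∀ i j, 0 ≤ x.2.1 i j) ∧ (∀ i, 0 ≤ x.2.2 i) ∧
    (∀ j, ∑ i, x.1 i j = x.2.2 j) ∧ (∀ j, ∑ i, x.2.1 i j = x.2.2 j)}

/-- 𝒞(a,b,r) = 𝒞₁(a,b,r) ∩ 𝒞₂(r). -/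
def Cset {n m : ℕ} (a : Fin n → ℝ) (b : Fin m → ℝ) (r : ℕ) : Set (LRTriple n m r) :=
  C1set a b r ∩ C2set r

/-- 𝒞(a,b,r,α) = 𝒞₁(a,b,r,α) ∩ 𝒞₂(r). -/
def CsetAlpha {n m : ℕ} (a : Fin n → ℝ) (b : Fin m → ℝ) (r : ℕ) (α : ℝ) :
    Set (LRTriple n m r) :=
  C1setAlpha a b r α ∩ C2set r

/-- F_ε(Q,R,g) = ⟨C, Q Diag(1/g) Rᵀ⟩ − ε H((Q,R,g)). -/
def Fobj {n m r : ℕ} (C : Mat n m) (ε : ℝ) (x : LRTriple n m r) : ℝ :=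
  frobInner C (x.1 * Matrix.diagonal (fun i => (x.2.2 i)⁻¹) * x.2.1ᵀ) -
    ε * (matH x.1 + matH x.2.1 + vecH x.2.2)

/-- LOT_{r,ε} = inf of F_ε over 𝒞(a,b,r). -/
def LOTre {n m : ℕ} (a : Fin n → ℝ) (b : Fin m → ℝ) (C : Mat n m) (ε : ℝ) (r : ℕ) : ℝ :=
  sInf (Fobj C ε '' Cset a b r)

/-- LOT_{r,ε,α} = inf of F_ε over 𝒞(a,b,r,α). -/
def LOTreAlpha {n m : ℕ} (a : Fin n → ℝ) (b : Fin m → ℝ) (C : Mat n m) (ε : ℝ) (r : ℕ)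
    (α : ℝ) : ℝ :=
  sInf (Fobj C ε '' CsetAlpha a b r α)

/-- Spectral norm (ℓ²→ℓ² operator norm) of a matrix. -/
def specNorm {n m : ℕ} (C : Mat n m) : ℝ :=
  ‖LinearMap.toContinuousLinearMap (Matrix.toEuclideanLin C)‖

/-- The gradient ∇F_ε(Q,R,g) =
(C R Diag(1/g) + ε log Q, Cᵀ Q Diag(1/g) + ε log R, −𝒟(Qᵀ C R)/g² + ε log g). -/
def gradF {n m r : ℕ} (C : Mat n m) (ε : ℝ) (x : LRTriple n m r) : LRTriple n m r :=
  (Matrix.of fun i k => (C * x.2.1) i k * (x.2.2 k)⁻¹ + ε * Real.log (x.1 i k),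
   Matrix.of fun j k => (Cᵀ * x.1) j k * (x.2.2 k)⁻¹ + ε * Real.log (x.2.1 j k),
   fun k => -((x.1ᵀ * C * x.2.1) k k) / (x.2.2 k) ^ 2 + ε * Real.log (x.2.2 k))

/-- Entrywise logarithm of a triple. -/
def logTriple {n m r : ℕ} (x : LRTriple n m r) : LRTriple n m r :=
  (Matrix.of fun i k => Real.log (x.1 i k), Matrix.of fun j k => Real.log (x.2.1 j k),
   fun k => Real.log (x.2.2 k))

/-- The feasible set Π_{a,g} × Π_{b,g}. -/
def pairFeasible {n m r : ℕ} (a : Fin n → ℝ) (b : Fin m → ℝ) (g : Fin r → ℝ) :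
    Set (LRPair n m r) :=
  {u | u.1 ∈ couplings a g ∧ u.2 ∈ couplings b g}

/-- f_ε(Q,R) = ⟨C, Q Diag(1/g) Rᵀ⟩ − ε (H(Q) + H(R)) for fixed `g`. -/
def fobj {n m r : ℕ} (C : Mat n m) (g : Fin r → ℝ) (ε : ℝ) (x : LRPair n m r) : ℝ :=
  frobInner C (x.1 * Matrix.diagonal (fun i => (g i)⁻¹) * x.2ᵀ) - ε * (matH x.1 + matH x.2)

/-- LOT_{r,g,ε} = inf of f_ε over Π_{a,g} × Π_{b,g}. -/
def LOTfix {n m r : ℕ} (a : Fin n → ℝ) (b : Fin m → ℝ) (g : Fin r → ℝ) (C : Mat n m)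
    (ε : ℝ) : ℝ :=
  sInf (fobj C g ε '' pairFeasible a b g)

/-- The gradient ∇f_ε(Q,R) = (C R Diag(1/g) + ε log Q, Cᵀ Q Diag(1/g) + ε log R). -/
def gradf {n m r : ℕ} (C : Mat n m) (g : Fin r → ℝ) (ε : ℝ) (x : LRPair n m r) :
    LRPair n m r :=
  (Matrix.of fun i k => (C * x.2) i k * (g k)⁻¹ + ε * Real.log (x.1 i k),
   Matrix.of fun j k => (Cᵀ * x.1) j k * (g k)⁻¹ + ε * Real.log (x.2 j k))

/-- Entrywise logarithm of a pair. -/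
def logPair {n m r : ℕ} (x : LRPair n m r) : LRPair n m r :=
  (Matrix.of fun i k => Real.log (x.1 i k), Matrix.of fun j k => Real.log (x.2 j k))

end

-- AUX START

-- ===== auxiliary lemmas =====
section Aux
open Filter Set

variable {n m r : ℕ}

lemma specNorm_nonneg (C : Mat n m) : 0 ≤ specNorm C := norm_nonneg _

lemma euclid_bound (C : Mat n m) (q : Fin n → ℝ) (r' : Fin m → ℝ) :
    ∑ i, ∑ j, C i j * q i * r' j ≤
      specNorm C * Real.sqrt (∑ i, q i ^ 2) * Real.sqrt (∑ j, r' j ^ 2) := by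
  set T := LinearMap.toContinuousLinearMap (Matrix.toEuclideanLin C) with hT
  set qE : EuclideanSpace ℝ (Fin n) := (WithLp.equiv 2 _).symm q with hqE
  set rE : EuclideanSpace ℝ (Fin m) := (WithLp.equiv 2 _).symm r' with hrE
  have hTr : T rE = (WithLp.equiv 2 (Fin n → ℝ)).symm (C *ᵥ r') := by
    simp [hT, hrE, LinearMap.coe_toContinuousLinearMap',
      Matrix.toEuclideanLin_apply_piLp_toLp]
  have h1 : ∑ i, ∑ j, C i j * q i * r' j = ⟪qE, T rE⟫ := by
    rw [hTr]
    simp only [PiLp.inner_apply, RCLike.inner_apply, conj_trivial]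
    have hv : ∀ i, ((WithLp.equiv 2 (Fin n → ℝ)).symm q) i = q i := fun _ => rfl
    have h2 : ∀ i, ((WithLp.equiv 2 (Fin n → ℝ)).symm (C *ᵥ r')) i = ∑ j, C i j * r' j :=
      fun i => by simp [Matrix.mulVec, dotProduct]
    simp only [hv, h2, hqE]
    refine Finset.sum_congr rfl fun i _ => ?_
    rw [Finset.sum_mul]
    exact Finset.sum_congr rfl fun j _ => by ring
  have h2 : ⟪qE, T rE⟫ ≤ ‖qE‖ * ‖T rE‖ := real_inner_le_norm _ _
  have h3 : ‖T rE‖ ≤ ‖T‖ * ‖rE‖ := T.le_opNorm _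
  have hq : ‖qE‖ = Real.sqrt (∑ i, q i ^ 2) := by
    rw [EuclideanSpace.norm_eq]
    congr 1; exact Finset.sum_congr rfl fun i _ => by rw [Real.norm_eq_abs, sq_abs]; rfl
  have hr : ‖rE‖ = Real.sqrt (∑ j, r' j ^ 2) := by
    rw [EuclideanSpace.norm_eq]
    congr 1; exact Finset.sum_congr rfl fun i _ => by rw [Real.norm_eq_abs, sq_abs]; rfl
  calc ∑ i, ∑ j, C i j * q i * r' j = ⟪qE, T rE⟫ := h1
    _ ≤ ‖qE‖ * ‖T rE‖ := h2
    _ ≤ ‖qE‖ * (‖T‖ * ‖rE‖) := mul_le_mul_of_nonneg_left h3 (norm_nonneg _)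
    _ = specNorm C * Real.sqrt (∑ i, q i ^ 2) * Real.sqrt (∑ j, r' j ^ 2) := by
        rw [hq, hr, specNorm]; ring

lemma log_diff_ge {p q : ℝ} (hq : 0 < q) (hp : 0 < p) (hp1 : p ≤ 1) (hqp : q ≤ p) :
    p - q ≤ Real.log p - Real.log q := by
  have h := Real.log_le_sub_one_of_pos (div_pos hq hp)
  rw [Real.log_div (ne_of_gt hq) (ne_of_gt hp)] at h
  have h2 : 1 - q / p ≤ Real.log p - Real.log q := by linarith
  have h3 : p - q ≤ (1 - q / p) := by
    have e : 1 - q / p = (p - q) / p := by field_simp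
    rw [e, le_div_iff₀ hp]
    nlinarith
  linarith

lemma sym_term_ge_sq {p q : ℝ} (hp : 0 < p) (hp1 : p ≤ 1) (hq : 0 < q) (hq1 : q ≤ 1) :
    (p - q) ^ 2 ≤ (p - q) * (Real.log p - Real.log q) := by
  rcases le_total q p with h | h
  · have := log_diff_ge hq hp hp1 h
    nlinarith
  · have := log_diff_ge hp hq hq1 h
    nlinarith

lemma breg_nonneg {p q : ℝ} (hp : 0 < p) (hq : 0 < q) :
    0 ≤ p * (Real.log p - Real.log q) - p + q := by
  have h := Real.log_le_sub_one_of_pos (div_pos hq hp)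
  rw [Real.log_div (ne_of_gt hq) (ne_of_gt hp)] at h
  have h2 : p * (Real.log p - Real.log q) ≥ p * (1 - q / p) := by
    have : 1 - q / p ≤ Real.log p - Real.log q := by linarith
    nlinarith
  have : p * (1 - q / p) = p - q := by field_simp
  linarith

lemma breg_le_sym {p q : ℝ} (hp : 0 < p) (hq : 0 < q) :
    p * (Real.log p - Real.log q) - p + q ≤ (p - q) * (Real.log p - Real.log q) := by
  have h := breg_nonneg hq hp
  nlinarith

lemma sqrt_mul_sqrt_le {A B : ℝ} (hA : 0 ≤ A) (hB : 0 ≤ B) :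
    Real.sqrt A * Real.sqrt B ≤ (A + B) / 2 := by
  nlinarith [Real.sq_sqrt hA, Real.sq_sqrt hB, sq_nonneg (Real.sqrt A - Real.sqrt B),
    Real.sqrt_nonneg A, Real.sqrt_nonneg B]

lemma w_eval {x u : ℝ} (hx : 0 < x) (hu : 0 ≤ u) :
    u * (Real.log (u / x) - 1) = u * (Real.log u - Real.log x - 1) := by
  rcases eq_or_lt_of_le hu with h | h
  · simp [← h]
  · rw [Real.log_div (ne_of_gt h) (ne_of_gt hx)]

lemma w_convex {x p q : ℝ} (hx : 0 < x) (hp : 0 ≤ p) (hq : 0 ≤ q) {t : ℝ}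
    (ht0 : 0 ≤ t) (ht1 : t ≤ 1) :
    (q + t * (p - q)) * (Real.log (q + t * (p - q)) - Real.log x - 1) -
      q * (Real.log q - Real.log x - 1) ≤
    t * (p * (Real.log p - Real.log x - 1) - q * (Real.log q - Real.log x - 1)) := by
  have hcomb : q + t * (p - q) = (1 - t) * q + t * p := by ring
  have hmem : (1 - t) * q + t * p ∈ Set.Ici (0:ℝ) :=
    add_nonneg (mul_nonneg (by linarith) hq) (mul_nonneg ht0 hp)
  have hconv := Real.convexOn_mul_log.2 (Set.mem_Ici.2 hq) (Set.mem_Ici.2 hp)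
    (by linarith : (0:ℝ) ≤ 1 - t) ht0 (by ring)
  simp only [smul_eq_mul] at hconv
  rw [hcomb]
  nlinarith [hconv]

end Aux
section Abs
open Filter Set
lemma abstract_positivity {ι : Type*} [Fintype ι] (G xv yv : ι → ℝ) (c : ℝ) (hc : 0 < c)
    (hx : ∀ e, 0 < xv e) (hy : ∀ e, 0 ≤ yv e)
    (hseg : ∀ t ∈ Set.Icc (0:ℝ) 1,
      ((∑ e, G e * yv e) + c * ∑ e, yv e * (Real.log (yv e / xv e) - 1)) ≤
      ((∑ e, G e * (yv e + t * (xv e - yv e))) +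
        c * ∑ e, (yv e + t * (xv e - yv e)) *
          (Real.log ((yv e + t * (xv e - yv e)) / xv e) - 1))) :
    ∀ e, 0 < yv e := by
  classical
  by_contra hcon
  push_neg at hcon
  obtain ⟨e0, he0⟩ := hcon
  have hy0 : yv e0 = 0 := le_antisymm he0 (hy e0)
  set w : ι → ℝ → ℝ := fun e s => s * (Real.log s - Real.log (xv e) - 1) with hw
  set M : ℝ := (∑ e, |G e| * |xv e - yv e|) + c * ∑ e, |w e (xv e) - w e (yv e)| with hM
  have hM0 : 0 ≤ M := by
    apply add_nonneg
    · exact Finset.sum_nonneg fun e _ => mul_nonneg (abs_nonneg _) (abs_nonneg _)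
    · exact mul_nonneg hc.le (Finset.sum_nonneg fun e _ => abs_nonneg _)
  have key : ∀ t, t ∈ Set.Ioc (0:ℝ) 1 → 0 ≤ M + c * xv e0 * (Real.log t - 1) := by
    intro t ht
    have ht0 : 0 < t := ht.1
    have ht1 : t ≤ 1 := ht.2
    have hu : ∀ e, 0 ≤ yv e + t * (xv e - yv e) := by
      intro e
      have : yv e + t * (xv e - yv e) = (1 - t) * yv e + t * xv e := by ring
      rw [this]
      exact add_nonneg (mul_nonneg (by linarith) (hy e)) (mul_nonneg ht0.le (hx e).le)
    have h := hseg t ⟨ht0.le, ht1⟩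
    -- rewrite both KL sums in terms of w
    rw [Finset.sum_congr rfl (fun e _ => w_eval (hx e) (hy e)),
      Finset.sum_congr rfl (fun e _ => w_eval (hx e) (hu e))] at h
    -- difference form
    have hdiff : 0 ≤ (∑ e, G e * (t * (xv e - yv e))) +
        c * ∑ e, (w e (yv e + t * (xv e - yv e)) - w e (yv e)) := by
      have e1 : (∑ e, G e * (yv e + t * (xv e - yv e))) =
          (∑ e, G e * yv e) + ∑ e, G e * (t * (xv e - yv e)) := by
        rw [← Finset.sum_add_distrib]; exact Finset.sum_congr rfl fun e _ => by ring
      have e2 : (∑ e, (yv e + t * (xv e - yv e)) *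
            (Real.log (yv e + t * (xv e - yv e)) - Real.log (xv e) - 1)) =
          (∑ e, yv e * (Real.log (yv e) - Real.log (xv e) - 1)) +
            ∑ e, (w e (yv e + t * (xv e - yv e)) - w e (yv e)) := by
        rw [← Finset.sum_add_distrib]; exact Finset.sum_congr rfl fun e _ => by simp only [hw]; ring
      rw [e1, e2] at h
      nlinarith [h]
    -- bound the w-sum: split off e0
    have hsplit : (∑ e, (w e (yv e + t * (xv e - yv e)) - w e (yv e))) ≤
        (∑ e, t * |w e (xv e) - w e (yv e)|) + t * xv e0 * (Real.log t - 1) -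
          t * |w e0 (xv e0) - w e0 (yv e0)| := by
      rw [← Finset.sum_erase_add _ _ (Finset.mem_univ e0),
        ← Finset.sum_erase_add _ _ (Finset.mem_univ e0)]
      have harg : yv e0 + t * (xv e0 - yv e0) = t * xv e0 := by rw [hy0]; ring
      have hterm0 : w e0 (yv e0 + t * (xv e0 - yv e0)) - w e0 (yv e0) =
          t * xv e0 * (Real.log t - 1) := by
        rw [harg, hy0]
        simp only [hw]
        rw [Real.log_mul (ne_of_gt ht0) (ne_of_gt (hx e0))]
        ring
      rw [hterm0]
      have hrest : (∑ e ∈ Finset.univ.erase e0, (w e (yv e + t * (xv e - yv e)) - w e (yv e))) ≤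
          ∑ e ∈ Finset.univ.erase e0, t * |w e (xv e) - w e (yv e)| := by
        apply Finset.sum_le_sum
        intro e _
        have := w_convex (hx e) (hx e).le (hy e) ht0.le ht1
        calc w e (yv e + t * (xv e - yv e)) - w e (yv e)
            ≤ t * (w e (xv e) - w e (yv e)) := this
          _ ≤ t * |w e (xv e) - w e (yv e)| :=
              mul_le_mul_of_nonneg_left (le_abs_self _) ht0.le
      have htot : (∑ e, t * |w e (xv e) - w e (yv e)|) =
          (∑ e ∈ Finset.univ.erase e0, t * |w e (xv e) - w e (yv e)|) +
            t * |w e0 (xv e0) - w e0 (yv e0)| :=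
        (Finset.sum_erase_add _ _ (Finset.mem_univ e0)).symm
      linarith [hrest, htot]
    have hG : (∑ e, G e * (t * (xv e - yv e))) ≤ t * ∑ e, |G e| * |xv e - yv e| := by
      rw [Finset.mul_sum]
      apply Finset.sum_le_sum
      intro e _
      calc G e * (t * (xv e - yv e)) = t * (G e * (xv e - yv e)) := by ring
        _ ≤ t * |G e * (xv e - yv e)| := mul_le_mul_of_nonneg_left (le_abs_self _) ht0.le
        _ = t * (|G e| * |xv e - yv e|) := by rw [abs_mul]
    have habs0 : 0 ≤ t * |w e0 (xv e0) - w e0 (yv e0)| := mul_nonneg ht0.le (abs_nonneg _)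
    have hsum_abs : (∑ e, t * |w e (xv e) - w e (yv e)|) =
        t * ∑ e, |w e (xv e) - w e (yv e)| := by rw [Finset.mul_sum]
    have : 0 ≤ t * M + c * (t * xv e0 * (Real.log t - 1)) := by
      rw [hsum_abs] at hsplit
      have := mul_le_mul_of_nonneg_left hsplit hc.le
      simp only [hM, mul_add]
      nlinarith [hdiff, hG, mul_le_mul_of_nonneg_left hsplit hc.le, habs0,
        mul_nonneg hc.le habs0]
    nlinarith [this, ht0]
  -- contradiction with t → 0
  set t0 : ℝ := Real.exp (-(M / (c * xv e0)) - 1) with ht0def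
  have hcx : 0 < c * xv e0 := mul_pos hc (hx e0)
  have ht0pos : 0 < t0 := Real.exp_pos _
  have ht0le : t0 ≤ 1 := by
    rw [ht0def]
    apply Real.exp_le_one_iff.2  -- maybe wrong name
    have : 0 ≤ M / (c * xv e0) := div_nonneg hM0 hcx.le
    linarith
  have hlog : Real.log t0 = -(M / (c * xv e0)) - 1 := Real.log_exp _
  have := key t0 ⟨ht0pos, ht0le⟩
  rw [hlog] at this
  have hexp : c * xv e0 * (-(M / (c * xv e0)) - 1 - 1) = -M - 2 * (c * xv e0) := by
    rw [mul_sub, mul_sub, mul_neg, mul_div_cancel₀ M hcx.ne']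
    ring
  rw [hexp] at this
  linarith

lemma abstract_vi {ι : Type*} [Fintype ι] (G xv yv : ι → ℝ) (c : ℝ) (hc : 0 < c)
    (hx : ∀ e, 0 < xv e) (hy : ∀ e, 0 < yv e)
    (hseg : ∀ t ∈ Set.Icc (0:ℝ) 1,
      ((∑ e, G e * yv e) + c * ∑ e, yv e * (Real.log (yv e / xv e) - 1)) ≤
      ((∑ e, G e * (yv e + t * (xv e - yv e))) +
        c * ∑ e, (yv e + t * (xv e - yv e)) *
          (Real.log ((yv e + t * (xv e - yv e)) / xv e) - 1))) :
    (∑ e, G e * (yv e - xv e)) ≤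
      -(c * ∑ e, (yv e - xv e) * (Real.log (yv e) - Real.log (xv e))) := by
  classical
  set u : ι → ℝ → ℝ := fun e t => yv e + t * (xv e - yv e) with hudef
  set φ : ℝ → ℝ := fun t => (∑ e, G e * u e t) +
    c * ∑ e, (u e t) * (Real.log (u e t / xv e) - 1) with hφdef
  set d : ℝ := (∑ e, G e * (xv e - yv e)) +
    c * ∑ e, (xv e - yv e) * (Real.log (yv e) - Real.log (xv e)) with hddef
  have hu : ∀ e, HasDerivAt (fun t => u e t) (xv e - yv e) 0 :=
    fun e => (hasDerivAt_mul_const (xv e - yv e)).const_add (yv e)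
  have hu0 : ∀ e, u e 0 = yv e := fun e => by simp [hudef]
  have hψ : ∀ e, HasDerivAt (fun t => (u e t) * (Real.log (u e t / xv e) - 1))
      ((xv e - yv e) * (Real.log (yv e) - Real.log (xv e))) 0 := by
    intro e
    have hposev : ∀ᶠ t in nhds (0:ℝ), 0 < u e t := by
      have hcont : ContinuousAt (fun t => u e t) 0 := (hu e).continuousAt
      have : Tendsto (fun t => u e t) (nhds 0) (nhds (yv e)) := by
        simpa [hu0 e] using hcont.tendsto
      exact this.eventually (eventually_gt_nhds (hy e))
    have hEq : (fun t => (u e t) * (Real.log (u e t / xv e) - 1)) =ᶠ[nhds (0:ℝ)]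
        (fun t => (u e t) * (Real.log (u e t) - Real.log (xv e) - 1)) := by
      filter_upwards [hposev] with t ht
      rw [Real.log_div (ne_of_gt ht) (ne_of_gt (hx e))]
    have hne : u e 0 ≠ 0 := by rw [hu0 e]; exact ne_of_gt (hy e)
    have hlog : HasDerivAt (fun t => Real.log (u e t)) ((u e 0)⁻¹ * (xv e - yv e)) 0 :=
      (Real.hasDerivAt_log hne).comp 0 (hu e)
    have hmul : HasDerivAt (fun t => (u e t) * (Real.log (u e t) - Real.log (xv e) - 1))
        ((xv e - yv e) * (Real.log (u e 0) - Real.log (xv e) - 1) +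
          (u e 0) * ((u e 0)⁻¹ * (xv e - yv e))) 0 :=
      (hu e).mul ((hlog.sub_const _).sub_const _)
    have hval : (xv e - yv e) * (Real.log (u e 0) - Real.log (xv e) - 1) +
        (u e 0) * ((u e 0)⁻¹ * (xv e - yv e)) =
        (xv e - yv e) * (Real.log (yv e) - Real.log (xv e)) := by
      rw [hu0 e]
      field_simp [ne_of_gt (hy e)]
      ring
    rw [hval] at hmul
    exact hmul.congr_of_eventuallyEq hEq
  have hφ : HasDerivAt φ d 0 := by
    have h1 : HasDerivAt (fun t => ∑ e, G e * u e t) (∑ e, G e * (xv e - yv e)) 0 :=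
      HasDerivAt.fun_sum fun e _ => (hu e).const_mul (G e)
    have h2 : HasDerivAt (fun t => ∑ e, (u e t) * (Real.log (u e t / xv e) - 1))
        (∑ e, (xv e - yv e) * (Real.log (yv e) - Real.log (xv e))) 0 :=
      HasDerivAt.fun_sum fun e _ => hψ e
    exact h1.add (h2.const_mul c)
  have hd0 : 0 ≤ d := by
    have hT : Tendsto (slope φ 0) (nhdsWithin 0 {(0:ℝ)}ᶜ) (nhds d) :=
      hasDerivAt_iff_tendsto_slope.1 hφ
    have hT' : Tendsto (slope φ 0) (nhdsWithin 0 (Set.Ioi 0)) (nhds d) :=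
      hT.mono_left (nhdsWithin_mono 0 (fun t ht => ne_of_gt ht))
    apply ge_of_tendsto hT'
    filter_upwards [Ioc_mem_nhdsGT_of_mem (Set.mem_Ico.2 ⟨le_refl (0:ℝ), one_pos⟩)] with t ht
    have hseg' := hseg t ⟨ht.1.le, ht.2⟩
    have hφ0 : φ 0 = (∑ e, G e * yv e) + c * ∑ e, yv e * (Real.log (yv e / xv e) - 1) := by
      simp [hφdef, hu0]
    have hφt : φ t = (∑ e, G e * (yv e + t * (xv e - yv e))) +
        c * ∑ e, (yv e + t * (xv e - yv e)) *
          (Real.log ((yv e + t * (xv e - yv e)) / xv e) - 1) := rfl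
    rw [slope_def_field]
    have : φ 0 ≤ φ t := by rw [hφ0, hφt]; exact hseg'
    have ht0 : (0:ℝ) < t := ht.1
    apply div_nonneg (by linarith) (by linarith)
  -- rearrange
  have e1 : (∑ e, G e * (xv e - yv e)) + (∑ e, G e * (yv e - xv e)) = 0 := by
    rw [← Finset.sum_add_distrib]; exact Finset.sum_eq_zero fun e _ => by ring
  have e2 : (∑ e, (xv e - yv e) * (Real.log (yv e) - Real.log (xv e))) +
      (∑ e, (yv e - xv e) * (Real.log (yv e) - Real.log (xv e))) = 0 := by
    rw [← Finset.sum_add_distrib]; exact Finset.sum_eq_zero fun e _ => by ring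
  rw [hddef] at hd0
  nlinarith [hd0, e1, e2, hc]

end Abs

section Expand
variable {n m r : ℕ}

lemma tri_expand (C : Mat n m) (g : Fin r → ℝ) (A : Mat n r) (B : Mat m r) :
    frobInner C (A * Matrix.diagonal (fun i => (g i)⁻¹) * Bᵀ) =
      ∑ k, ∑ i, ∑ j, C i j * A i k * B j k * (g k)⁻¹ := by
  have hentry : ∀ i j, (A * Matrix.diagonal (fun i => (g i)⁻¹) * Bᵀ) i j =
      ∑ k, A i k * (g k)⁻¹ * B j k := by
    intro i j
    rw [Matrix.mul_apply]
    exact Finset.sum_congr rfl fun k _ => by rw [Matrix.mul_diagonal, Matrix.transpose_apply]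
  have h1 : frobInner C (A * Matrix.diagonal (fun i => (g i)⁻¹) * Bᵀ) =
      ∑ i, ∑ j, ∑ k, C i j * A i k * B j k * (g k)⁻¹ := by
    simp only [frobInner, hentry, Finset.mul_sum]
    refine Finset.sum_congr rfl fun i _ => Finset.sum_congr rfl fun j _ =>
      Finset.sum_congr rfl fun k _ => by ring
  rw [h1]
  rw [show (∑ i, ∑ j, ∑ k, C i j * A i k * B j k * (g k)⁻¹) =
      ∑ i, ∑ k, ∑ j, C i j * A i k * B j k * (g k)⁻¹ from
    Finset.sum_congr rfl fun i _ => Finset.sum_comm]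
  exact Finset.sum_comm

lemma gradQ_expand (C : Mat n m) (g : Fin r → ℝ) (ε : ℝ) (X : LRPair n m r) (V : Mat n r) :
    frobInner (gradf C g ε X).1 V =
      (∑ k, ∑ i, ∑ j, C i j * X.2 j k * V i k * (g k)⁻¹) +
        ε * ∑ i, ∑ k, Real.log (X.1 i k) * V i k := by
  have h1 : frobInner (gradf C g ε X).1 V =
      (∑ i, ∑ k, ∑ j, C i j * X.2 j k * V i k * (g k)⁻¹) +
        ∑ i, ∑ k, ε * (Real.log (X.1 i k) * V i k) := by
    simp only [frobInner, gradf, Matrix.of_apply, Matrix.mul_apply, ← Finset.sum_add_distrib]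
    refine Finset.sum_congr rfl fun i _ => Finset.sum_congr rfl fun k _ => ?_
    rw [add_mul, Finset.sum_mul, Finset.sum_mul]
    congr 1
    · exact Finset.sum_congr rfl fun j _ => by ring
    · ring
  rw [h1]
  congr 1
  · exact Finset.sum_comm
  · simp only [← Finset.mul_sum]

lemma gradR_expand (C : Mat n m) (g : Fin r → ℝ) (ε : ℝ) (X : LRPair n m r) (V : Mat m r) :
    frobInner (gradf C g ε X).2 V =
      (∑ k, ∑ i, ∑ j, C i j * X.1 i k * V j k * (g k)⁻¹) +
        ε * ∑ j, ∑ k, Real.log (X.2 j k) * V j k := by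
  have h1 : frobInner (gradf C g ε X).2 V =
      (∑ j, ∑ k, ∑ i, C i j * X.1 i k * V j k * (g k)⁻¹) +
        ∑ j, ∑ k, ε * (Real.log (X.2 j k) * V j k) := by
    simp only [frobInner, gradf, Matrix.of_apply, Matrix.mul_apply, Matrix.transpose_apply,
      ← Finset.sum_add_distrib]
    refine Finset.sum_congr rfl fun j _ => Finset.sum_congr rfl fun k _ => ?_
    rw [add_mul, Finset.sum_mul, Finset.sum_mul]
    congr 1
    · exact Finset.sum_congr rfl fun i _ => by ring
    · ring
  rw [h1]
  congr 1
  · rw [show (∑ j, ∑ k, ∑ i, C i j * X.1 i k * V j k * (g k)⁻¹) =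
        ∑ k, ∑ j, ∑ i, C i j * X.1 i k * V j k * (g k)⁻¹ from Finset.sum_comm]
    exact Finset.sum_congr rfl fun k _ => Finset.sum_comm
  · simp only [← Finset.mul_sum]

lemma ent_block {p q : ℕ} (P P' : Mat p q) :
    matH P - matH P' - (∑ i, ∑ k, Real.log (P i k) * (P' i k - P i k)) =
      ∑ i, ∑ k, (P' i k * (Real.log (P' i k) - Real.log (P i k)) - P' i k + P i k) := by
  simp only [matH, ← Finset.sum_neg_distrib, ← Finset.sum_sub_distrib, sub_neg_eq_add,
    ← Finset.sum_add_distrib]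
  refine Finset.sum_congr rfl fun i _ => Finset.sum_congr rfl fun k _ => by ring

lemma expansion (C : Mat n m) (g : Fin r → ℝ) (ε : ℝ) (X Y : LRPair n m r) :
    fobj C g ε Y = fobj C g ε X + pairInner (gradf C g ε X) (Y - X)
      + (∑ k, ∑ i, ∑ j, C i j * (Y.1 i k - X.1 i k) * (Y.2 j k - X.2 j k) * (g k)⁻¹)
      + ε * ((∑ i, ∑ k, (Y.1 i k * (Real.log (Y.1 i k) - Real.log (X.1 i k)) - Y.1 i k + X.1 i k))
           + (∑ j, ∑ k, (Y.2 j k * (Real.log (Y.2 j k) - Real.log (X.2 j k)) - Y.2 j k + X.2 j k))) := by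
  have tY := tri_expand C g Y.1 Y.2
  have tX := tri_expand C g X.1 X.2
  have gq := gradQ_expand C g ε X (Y.1 - X.1)
  have gr := gradR_expand C g ε X (Y.2 - X.2)
  have e1 := ent_block X.1 Y.1
  have e2 := ent_block X.2 Y.2
  have hV1 : (Y - X).1 = Y.1 - X.1 := rfl
  have hV2 : (Y - X).2 = Y.2 - X.2 := rfl
  simp only [fobj, pairInner, hV1, hV2, tY, tX, gq, gr, Matrix.sub_apply] at *
  -- combine bilinear triple sums
  have bil : (∑ k, ∑ i, ∑ j, C i j * Y.1 i k * Y.2 j k * (g k)⁻¹) =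
      (∑ k, ∑ i, ∑ j, C i j * X.1 i k * X.2 j k * (g k)⁻¹)
      + ((∑ k, ∑ i, ∑ j, C i j * X.2 j k * (Y.1 i k - X.1 i k) * (g k)⁻¹)
      + (∑ k, ∑ i, ∑ j, C i j * X.1 i k * (Y.2 j k - X.2 j k) * (g k)⁻¹)
      + (∑ k, ∑ i, ∑ j, C i j * (Y.1 i k - X.1 i k) * (Y.2 j k - X.2 j k) * (g k)⁻¹)) := by
    simp only [← Finset.sum_add_distrib]
    refine Finset.sum_congr rfl fun k _ => Finset.sum_congr rfl fun i _ =>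
      Finset.sum_congr rfl fun j _ => by ring
  linear_combination bil + ε * e1 + ε * e2

end Expand


section Bounds
variable {n m r : ℕ}

lemma diag_entry_le (d : Fin r → ℝ) (hd : ∀ k, 0 ≤ d k) (k : Fin r) :
    d k ≤ specNorm (Matrix.diagonal d) := by
  classical
  set q : Fin r → ℝ := fun i => if i = k then 1 else 0 with hqdef
  have h := euclid_bound (Matrix.diagonal d) q q
  have h1 : ∑ i, ∑ j, Matrix.diagonal d i j * q i * q j = d k := by
    rw [Finset.sum_eq_single k]
    · rw [Finset.sum_eq_single k]
      · simp [hqdef, Matrix.diagonal_apply_eq]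
      · intro j _ hj; simp [hqdef, hj]
      · intro hk; exact absurd (Finset.mem_univ k) hk
    · intro i _ hi; simp [hqdef, hi]
    · intro hk; exact absurd (Finset.mem_univ k) hk
  have h2 : (∑ i, q i ^ 2) = 1 := by
    rw [Finset.sum_eq_single k]
    · simp [hqdef]
    · intro i _ hi; simp [hqdef, hi]
    · intro hk; exact absurd (Finset.mem_univ k) hk
  rw [h1, h2, Real.sqrt_one, mul_one, mul_one] at h
  exact h

lemma bil_bound (C : Mat n m) (g : Fin r → ℝ) (hg : ∀ k, 0 < g k) (U : Mat n r) (V : Mat m r) :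
    ∑ k, ∑ i, ∑ j, C i j * U i k * V j k * (g k)⁻¹ ≤
      specNorm C * specNorm (Matrix.diagonal fun i => (g i)⁻¹) / 2 *
        ((∑ i, ∑ k, U i k ^ 2) + ∑ j, ∑ k, V j k ^ 2) := by
  set sC := specNorm C with hsC
  set sD := specNorm (Matrix.diagonal fun i => (g i)⁻¹) with hsD
  have hsC0 : 0 ≤ sC := specNorm_nonneg _
  have hsD0 : 0 ≤ sD := specNorm_nonneg _
  have hk : ∀ k, ∑ i, ∑ j, C i j * U i k * V j k * (g k)⁻¹ ≤
      sC * sD / 2 * ((∑ i, U i k ^ 2) + ∑ j, V j k ^ 2) := by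
    intro k
    have e1 : ∑ i, ∑ j, C i j * U i k * V j k * (g k)⁻¹ =
        (∑ i, ∑ j, C i j * U i k * V j k) * (g k)⁻¹ := by
      rw [Finset.sum_mul]
      exact Finset.sum_congr rfl fun i _ => by
        rw [Finset.sum_mul]
    have h2 := euclid_bound C (fun i => U i k) (fun j => V j k)
    have hgk : 0 ≤ (g k)⁻¹ := inv_nonneg.2 (hg k).le
    have hgkD : (g k)⁻¹ ≤ sD := diag_entry_le _ (fun k' => inv_nonneg.2 (hg k').le) k
    have hs0 : 0 ≤ Real.sqrt (∑ i, U i k ^ 2) * Real.sqrt (∑ j, V j k ^ 2) :=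
      mul_nonneg (Real.sqrt_nonneg _) (Real.sqrt_nonneg _)
    have hsq : Real.sqrt (∑ i, U i k ^ 2) * Real.sqrt (∑ j, V j k ^ 2) ≤
        ((∑ i, U i k ^ 2) + ∑ j, V j k ^ 2) / 2 :=
      sqrt_mul_sqrt_le (by positivity) (by positivity)
    calc ∑ i, ∑ j, C i j * U i k * V j k * (g k)⁻¹
        = (∑ i, ∑ j, C i j * U i k * V j k) * (g k)⁻¹ := e1
      _ ≤ (sC * Real.sqrt (∑ i, U i k ^ 2) * Real.sqrt (∑ j, V j k ^ 2)) * (g k)⁻¹ :=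
          mul_le_mul_of_nonneg_right h2 hgk
      _ ≤ (sC * Real.sqrt (∑ i, U i k ^ 2) * Real.sqrt (∑ j, V j k ^ 2)) * sD := by
          apply mul_le_mul_of_nonneg_left hgkD
          positivity
      _ ≤ sC * sD / 2 * ((∑ i, U i k ^ 2) + ∑ j, V j k ^ 2) := by
          have := mul_le_mul_of_nonneg_left hsq (mul_nonneg hsC0 hsD0)
          nlinarith [mul_nonneg hsC0 hsD0, hs0]
  calc ∑ k, ∑ i, ∑ j, C i j * U i k * V j k * (g k)⁻¹
      ≤ ∑ k, sC * sD / 2 * ((∑ i, U i k ^ 2) + ∑ j, V j k ^ 2) :=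
        Finset.sum_le_sum fun k _ => hk k
    _ = sC * sD / 2 * ((∑ i, ∑ k, U i k ^ 2) + ∑ j, ∑ k, V j k ^ 2) := by
        rw [← Finset.mul_sum]
        congr 1
        rw [Finset.sum_add_distrib]
        congr 1
        · exact Finset.sum_comm
        · exact Finset.sum_comm

end Bounds

section Flat
variable {n m r : ℕ}

def flatP (u : LRPair n m r) : (Fin n × Fin r) ⊕ (Fin m × Fin r) → ℝ :=
  Sum.elim (fun p => u.1 p.1 p.2) (fun p => u.2 p.1 p.2)

lemma sum_flat₂ (u v : LRPair n m r) (F : ℝ → ℝ → ℝ) :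
    ∑ e, F (flatP u e) (flatP v e) =
      (∑ i, ∑ k, F (u.1 i k) (v.1 i k)) + ∑ j, ∑ k, F (u.2 j k) (v.2 j k) := by
  rw [Fintype.sum_sum_type]
  congr 1
  · exact Fintype.sum_prod_type _
  · exact Fintype.sum_prod_type _

lemma sum_flat₁ (u : LRPair n m r) (F : ℝ → ℝ) :
    ∑ e, F (flatP u e) = (∑ i, ∑ k, F (u.1 i k)) + ∑ j, ∑ k, F (u.2 j k) := by
  rw [Fintype.sum_sum_type]
  congr 1
  · exact Fintype.sum_prod_type _
  · exact Fintype.sum_prod_type _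

lemma flatP_sub (u v : LRPair n m r) (e) : flatP (u - v) e = flatP u e - flatP v e := by
  cases e <;> rfl

lemma pairInner_flat (u v : LRPair n m r) :
    pairInner u v = ∑ e, flatP u e * flatP v e :=
  (sum_flat₂ u v (· * ·)).symm

lemma pairKL_flat (u v : LRPair n m r) :
    pairKL u v = ∑ e, flatP u e * (Real.log (flatP u e / flatP v e) - 1) :=
  (sum_flat₂ u v (fun p q => p * (Real.log (p / q) - 1))).symm

lemma flat_mass {a : Fin n → ℝ} {b : Fin m → ℝ} {g : Fin r → ℝ}
    (ha : a ∈ posSimplex n) (hb : b ∈ posSimplex m) {u : LRPair n m r}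
    (hu : u ∈ pairFeasible a b g) : ∑ e, flatP u e = 2 := by
  have h := sum_flat₁ u id
  simp only [id] at h
  rw [h]
  have h1 : (∑ i, ∑ k, u.1 i k) = 1 := by
    rw [Finset.sum_congr rfl fun i (_ : i ∈ Finset.univ) => hu.1.2.1 i]
    exact ha.2
  have h2 : (∑ j, ∑ k, u.2 j k) = 1 := by
    rw [Finset.sum_congr rfl fun j (_ : j ∈ Finset.univ) => hu.2.2.1 j]
    exact hb.2
  rw [h1, h2]; norm_num

lemma entry_le_one {a : Fin n → ℝ} {b : Fin m → ℝ} {g : Fin r → ℝ}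
    (ha : a ∈ posSimplex n) (hb : b ∈ posSimplex m) {u : LRPair n m r}
    (hu : u ∈ pairFeasible a b g) : ∀ e, flatP u e ≤ 1 := by
  intro e
  cases e with
  | inl p =>
      have h1 : u.1 p.1 p.2 ≤ ∑ k, u.1 p.1 k :=
        Finset.single_le_sum (fun k _ => hu.1.1 p.1 k) (Finset.mem_univ p.2)
      have h2 : a p.1 ≤ ∑ i, a i :=
        Finset.single_le_sum (fun i _ => (ha.1 i).le) (Finset.mem_univ p.1)
      have := hu.1.2.1 p.1
      simp only [flatP, Sum.elim_inl]
      rw [ha.2] at h2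
      linarith
  | inr p =>
      have h1 : u.2 p.1 p.2 ≤ ∑ k, u.2 p.1 k :=
        Finset.single_le_sum (fun k _ => hu.2.1 p.1 k) (Finset.mem_univ p.2)
      have h2 : b p.1 ≤ ∑ j, b j :=
        Finset.single_le_sum (fun j _ => (hb.1 j).le) (Finset.mem_univ p.1)
      have := hu.2.2.1 p.1
      simp only [flatP, Sum.elim_inr]
      rw [hb.2] at h2
      linarith

lemma entry_nonneg {a : Fin n → ℝ} {b : Fin m → ℝ} {g : Fin r → ℝ} {u : LRPair n m r}
    (hu : u ∈ pairFeasible a b g) : ∀ e, 0 ≤ flatP u e := by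
  intro e
  cases e with
  | inl p => exact hu.1.1 p.1 p.2
  | inr p => exact hu.2.1 p.1 p.2

end Flat


section Lower
variable {n m r : ℕ}

lemma neg_mul_log_le_one {p : ℝ} (h0 : 0 ≤ p) (h1 : p ≤ 1) : -(p * Real.log p) ≤ 1 := by
  rcases eq_or_lt_of_le h0 with h | h
  · simp [← h]
  · have hlog := Real.log_le_sub_one_of_pos (inv_pos.2 h)
    rw [Real.log_inv] at hlog
    have h2 : p * (-Real.log p) ≤ p * (p⁻¹ - 1) :=
      mul_le_mul_of_nonneg_left (by linarith) h0
    have h3 : p * (p⁻¹ - 1) = 1 - p := by field_simp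
    nlinarith

lemma matH_le {p q : ℕ} (P : Mat p q) (h0 : ∀ i k, 0 ≤ P i k) (h1 : ∀ i k, P i k ≤ 1) :
    matH P ≤ ∑ _i : Fin p, ∑ _k : Fin q, (2:ℝ) := by
  rw [matH, ← Finset.sum_neg_distrib]
  apply Finset.sum_le_sum
  intro i _
  rw [← Finset.sum_neg_distrib]
  apply Finset.sum_le_sum
  intro k _
  have := neg_mul_log_le_one (h0 i k) (h1 i k)
  nlinarith [h0 i k, h1 i k]

lemma fobj_lower {a : Fin n → ℝ} {b : Fin m → ℝ} {g : Fin r → ℝ}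
    (ha : a ∈ posSimplex n) (hb : b ∈ posSimplex m) (hg : ∀ k, 0 < g k)
    (C : Mat n m) {ε : ℝ} (hε : 0 ≤ ε) :
    ∀ u ∈ pairFeasible a b g,
      -(∑ k, ∑ i, ∑ j, |C i j| * (g k)⁻¹) -
        ε * ((∑ _i : Fin n, ∑ _k : Fin r, (2:ℝ)) + ∑ _j : Fin m, ∑ _k : Fin r, (2:ℝ)) ≤
        fobj C g ε u := by
  intro u hu
  have hu1 : ∀ i k, 0 ≤ u.1 i k := hu.1.1
  have hu2 : ∀ j k, 0 ≤ u.2 j k := hu.2.1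
  have hub1 : ∀ i k, u.1 i k ≤ 1 := fun i k => entry_le_one ha hb hu (Sum.inl (i, k))
  have hub2 : ∀ j k, u.2 j k ≤ 1 := fun j k => entry_le_one ha hb hu (Sum.inr (j, k))
  rw [fobj, tri_expand]
  have hbil : -(∑ k, ∑ i, ∑ j, |C i j| * (g k)⁻¹) ≤
      ∑ k, ∑ i, ∑ j, C i j * u.1 i k * u.2 j k * (g k)⁻¹ := by
    rw [← Finset.sum_neg_distrib]
    apply Finset.sum_le_sum; intro k _
    rw [← Finset.sum_neg_distrib]
    apply Finset.sum_le_sum; intro i _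
    rw [← Finset.sum_neg_distrib]
    apply Finset.sum_le_sum; intro j _
    have hgk : 0 ≤ (g k)⁻¹ := inv_nonneg.2 (hg k).le
    have h1 : |C i j * u.1 i k * u.2 j k * (g k)⁻¹| ≤ |C i j| * (g k)⁻¹ := by
      rw [abs_mul, abs_mul, abs_mul, abs_of_nonneg (hu1 i k), abs_of_nonneg (hu2 j k),
        abs_of_nonneg hgk]
      have t0 : 0 ≤ |C i j| * u.1 i k := mul_nonneg (abs_nonneg _) (hu1 i k)
      have : |C i j| * u.1 i k * u.2 j k ≤ |C i j| :=
        le_trans (mul_le_of_le_one_right t0 (hub2 j k))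
          (mul_le_of_le_one_right (abs_nonneg _) (hub1 i k))
      nlinarith
    have := neg_abs_le (C i j * u.1 i k * u.2 j k * (g k)⁻¹)
    linarith
  have hH1 := matH_le u.1 hu1 hub1
  have hH2 := matH_le u.2 hu2 hub2
  have : ε * (matH u.1 + matH u.2) ≤
      ε * ((∑ _i : Fin n, ∑ _k : Fin r, (2:ℝ)) + ∑ _j : Fin m, ∑ _k : Fin r, (2:ℝ)) := by
    apply mul_le_mul_of_nonneg_left _ hε
    linarith
  linarith

lemma LOT_le {a : Fin n → ℝ} {b : Fin m → ℝ} {g : Fin r → ℝ}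
    (ha : a ∈ posSimplex n) (hb : b ∈ posSimplex m) (hg : ∀ k, 0 < g k)
    (C : Mat n m) {ε : ℝ} (hε : 0 ≤ ε) {u : LRPair n m r} (hu : u ∈ pairFeasible a b g) :
    LOTfix a b g C ε ≤ fobj C g ε u := by
  apply csInf_le
  · exact ⟨_, fun y hy => by
      obtain ⟨v, hv, rfl⟩ := hy
      exact fobj_lower ha hb hg C hε v hv⟩
  · exact ⟨u, hu, rfl⟩

end Lower

-- AUX END

/-- Non-asymptotic stationary convergence of mirror descent for the
fixed-marginal objective `f_ε` on `Π_{a,g} × Π_{b,g}` with step `γ = 1/(2 L_ε)`,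
`L_ε = sqrt(2(‖C‖₂² ‖Diag(1/g)‖₂² + ε²))`:
`min_{0 ≤ k ≤ N−1} Δ_ε(x_k, γ) ≤ 4 L_ε D₀ / N`. -/
theorem mirror_descent_fixed_marginal_convergence {n m r : ℕ}
    (a : Fin n → ℝ) (ha : a ∈ posSimplex n)
    (b : Fin m → ℝ) (hb : b ∈ posSimplex m)
    (g : Fin r → ℝ) (hg : g ∈ posSimplex r)
    (C : Mat n m) (ε : ℝ) (hε : 0 ≤ ε)
    (N : ℕ) (hN : 1 ≤ N)
    (L γ : ℝ)
    (hL : L = Real.sqrt (2 * (specNorm C ^ 2 *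
      specNorm (Matrix.diagonal fun i => (g i)⁻¹) ^ 2 + ε ^ 2)))
    (hγ : γ = 1 / (2 * L))
    (x : ℕ → LRPair n m r)
    (h₀ : x 0 ∈ pairFeasible a b g)
    (hpos₀ : (∀ i j, 0 < (x 0).1 i j) ∧ ∀ i j, 0 < (x 0).2 i j)
    (hiter : ∀ k : ℕ, x (k + 1) ∈ pairFeasible a b g ∧
      ∀ u ∈ pairFeasible a b g,
        pairInner (gradf C g ε (x k)) (x (k + 1)) + (1 / γ) * pairKL (x (k + 1)) (x k) ≤
          pairInner (gradf C g ε (x k)) u + (1 / γ) * pairKL u (x k))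
    (D₀ : ℝ) (hD₀ : D₀ = fobj C g ε (x 0) - LOTfix a b g C ε) :
    ∃ k < N, (1 / γ ^ 2) * (pairKL (x k) (x (k + 1)) + pairKL (x (k + 1)) (x k)) ≤
      4 * L * D₀ / N := by
  classical
  have hL0 : 0 ≤ L := hL ▸ Real.sqrt_nonneg _
  rcases eq_or_lt_of_le hL0 with hLz | hLpos
  · refine ⟨0, by omega, ?_⟩
    rw [hγ, ← hLz]
    norm_num
  have hgpos : ∀ k, 0 < g k := hg.1
  have hγpos : 0 < γ := by rw [hγ]; positivity
  have hγinv : 1 / γ = 2 * L := by rw [hγ]; field_simp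
  have hcpos : 0 < 1 / γ := by rw [hγinv]; linarith
  have hγ2 : 1 / γ ^ 2 = 4 * L ^ 2 := by
    rw [hγ]; field_simp; ring
  have hεκL : ε + specNorm C * specNorm (Matrix.diagonal fun i => (g i)⁻¹) / 2 ≤ L := by
    have hκ0 : 0 ≤ specNorm C * specNorm (Matrix.diagonal fun i => (g i)⁻¹) :=
      mul_nonneg (specNorm_nonneg _) (specNorm_nonneg _)
    have h1 : ε + specNorm C * specNorm (Matrix.diagonal fun i => (g i)⁻¹) / 2 =
        Real.sqrt ((ε + specNorm C * specNorm (Matrix.diagonal fun i => (g i)⁻¹) / 2) ^ 2) :=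
      (Real.sqrt_sq (by positivity)).symm
    rw [h1, hL]
    apply Real.sqrt_le_sqrt
    nlinarith [sq_nonneg (ε - specNorm C * specNorm (Matrix.diagonal fun i => (g i)⁻¹))]
  have hfeas : ∀ k, x k ∈ pairFeasible a b g := by
    intro k
    cases k with
    | zero => exact h₀
    | succ k' => exact (hiter k').1
  -- the segment points
  set z : ℕ → ℝ → LRPair n m r := fun k t =>
    (Matrix.of fun i k' => (x (k+1)).1 i k' + t * ((x k).1 i k' - (x (k+1)).1 i k'),
     Matrix.of fun j k' => (x (k+1)).2 j k' + t * ((x k).2 j k' - (x (k+1)).2 j k')) with hz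
  have hzfeas : ∀ k t, 0 ≤ t → t ≤ 1 → z k t ∈ pairFeasible a b g := by
    intro k t ht0 ht1
    have hyf := hfeas (k+1)
    have hxf := hfeas k
    refine ⟨⟨?_, ?_, ?_⟩, ?_, ?_, ?_⟩
    · intro i k'
      simp only [hz, Matrix.of_apply]
      nlinarith [mul_nonneg ht0 (hxf.1.1 i k'), hyf.1.1 i k',
        mul_nonneg (sub_nonneg.2 ht1) (hyf.1.1 i k')]
    · intro i
      simp only [hz, Matrix.of_apply]
      rw [Finset.sum_add_distrib, ← Finset.mul_sum, Finset.sum_sub_distrib,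
        hyf.1.2.1 i, hxf.1.2.1 i]
      ring
    · intro k'
      simp only [hz, Matrix.of_apply]
      rw [Finset.sum_add_distrib, ← Finset.mul_sum, Finset.sum_sub_distrib,
        hyf.1.2.2 k', hxf.1.2.2 k']
      ring
    · intro j k'
      simp only [hz, Matrix.of_apply]
      nlinarith [mul_nonneg ht0 (hxf.2.1 j k'), hyf.2.1 j k',
        mul_nonneg (sub_nonneg.2 ht1) (hyf.2.1 j k')]
    · intro j
      simp only [hz, Matrix.of_apply]
      rw [Finset.sum_add_distrib, ← Finset.mul_sum, Finset.sum_sub_distrib,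
        hyf.2.2.1 j, hxf.2.2.1 j]
      ring
    · intro k'
      simp only [hz, Matrix.of_apply]
      rw [Finset.sum_add_distrib, ← Finset.mul_sum, Finset.sum_sub_distrib,
        hyf.2.2.2 k', hxf.2.2.2 k']
      ring
  -- segment inequality, flattened
  have hsegf : ∀ k, ∀ t ∈ Set.Icc (0:ℝ) 1,
      ((∑ e, flatP (gradf C g ε (x k)) e * flatP (x (k+1)) e) +
        (1/γ) * ∑ e, flatP (x (k+1)) e *
          (Real.log (flatP (x (k+1)) e / flatP (x k) e) - 1)) ≤
      ((∑ e, flatP (gradf C g ε (x k)) e *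
          (flatP (x (k+1)) e + t * (flatP (x k) e - flatP (x (k+1)) e))) +
        (1/γ) * ∑ e, (flatP (x (k+1)) e + t * (flatP (x k) e - flatP (x (k+1)) e)) *
          (Real.log ((flatP (x (k+1)) e + t * (flatP (x k) e - flatP (x (k+1)) e)) /
            flatP (x k) e) - 1)) := by
    intro k t ht
    have h := (hiter k).2 (z k t) (hzfeas k t ht.1 ht.2)
    rw [pairInner_flat, pairInner_flat, pairKL_flat, pairKL_flat] at h
    have hze : ∀ e, flatP (z k t) e =
        flatP (x (k+1)) e + t * (flatP (x k) e - flatP (x (k+1)) e) := by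
      intro e; cases e <;> rfl
    simpa only [hze] using h
  -- positivity of iterates
  have hpos : ∀ k, ∀ e, 0 < flatP (x k) e := by
    intro k
    induction k with
    | zero =>
        intro e
        cases e with
        | inl p => exact hpos₀.1 p.1 p.2
        | inr p => exact hpos₀.2 p.1 p.2
    | succ k' ih =>
        exact abstract_positivity (flatP (gradf C g ε (x k'))) (flatP (x k'))
          (flatP (x (k'+1))) (1/γ) hcpos ih (entry_nonneg (hfeas (k'+1))) (hsegf k')
  -- symmetrized Bregman
  set Sk : ℕ → ℝ := fun k => ∑ e, (flatP (x (k+1)) e - flatP (x k) e) *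
    (Real.log (flatP (x (k+1)) e) - Real.log (flatP (x k) e)) with hSkdef
  have hVI : ∀ k, (∑ e, flatP (gradf C g ε (x k)) e *
      (flatP (x (k+1)) e - flatP (x k) e)) ≤ -((1/γ) * Sk k) :=
    fun k => abstract_vi (flatP (gradf C g ε (x k))) (flatP (x k)) (flatP (x (k+1)))
      (1/γ) hcpos (hpos k) (hpos (k+1)) (hsegf k)
  have hSk_ge : ∀ k, (∑ e, (flatP (x (k+1)) e - flatP (x k) e) ^ 2) ≤ Sk k := by
    intro k
    apply Finset.sum_le_sum
    intro e _
    exact sym_term_ge_sq (hpos (k+1) e) (entry_le_one ha hb (hfeas (k+1)) e)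
      (hpos k e) (entry_le_one ha hb (hfeas k) e)
  have hSk0 : ∀ k, 0 ≤ Sk k := fun k =>
    le_trans (Finset.sum_nonneg fun e _ => sq_nonneg _) (hSk_ge k)
  -- one-step descent
  have hstep : ∀ k, fobj C g ε (x (k+1)) ≤ fobj C g ε (x k) - L * Sk k := by
    intro k
    have hexp := expansion C g ε (x k) (x (k+1))
    have hpi : pairInner (gradf C g ε (x k)) (x (k+1) - x k) =
        ∑ e, flatP (gradf C g ε (x k)) e * (flatP (x (k+1)) e - flatP (x k) e) := by
      rw [pairInner_flat]
      exact Finset.sum_congr rfl fun e _ => by rw [flatP_sub]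
    have hB := bil_bound C g hgpos ((x (k+1)).1 - (x k).1) ((x (k+1)).2 - (x k).2)
    simp only [Matrix.sub_apply] at hB
    have hsq : (∑ i, ∑ k', ((x (k+1)).1 i k' - (x k).1 i k') ^ 2) +
        (∑ j, ∑ k', ((x (k+1)).2 j k' - (x k).2 j k') ^ 2) =
        ∑ e, (flatP (x (k+1)) e - flatP (x k) e) ^ 2 :=
      (sum_flat₂ (x (k+1)) (x k) (fun p q => (p - q) ^ 2)).symm
    have hW : (∑ i, ∑ k', ((x (k+1)).1 i k' *
          (Real.log ((x (k+1)).1 i k') - Real.log ((x k).1 i k')) -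
          (x (k+1)).1 i k' + (x k).1 i k')) +
        (∑ j, ∑ k', ((x (k+1)).2 j k' *
          (Real.log ((x (k+1)).2 j k') - Real.log ((x k).2 j k')) -
          (x (k+1)).2 j k' + (x k).2 j k')) ≤ Sk k := by
      rw [← sum_flat₂ (x (k+1)) (x k)
        (fun p q => p * (Real.log p - Real.log q) - p + q)]
      apply Finset.sum_le_sum
      intro e _
      exact breg_le_sym (hpos (k+1) e) (hpos k e)
    rw [hexp, hpi]
    have h1 := hVI k
    have h2 : specNorm C * specNorm (Matrix.diagonal fun i => (g i)⁻¹) / 2 *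
        ((∑ i, ∑ k', ((x (k+1)).1 i k' - (x k).1 i k') ^ 2) +
          (∑ j, ∑ k', ((x (k+1)).2 j k' - (x k).2 j k') ^ 2)) ≤
        specNorm C * specNorm (Matrix.diagonal fun i => (g i)⁻¹) / 2 * Sk k := by
      have hκ0' : 0 ≤ specNorm C * specNorm (Matrix.diagonal fun i => (g i)⁻¹) / 2 := by
        have h0 := mul_nonneg (specNorm_nonneg C)
          (specNorm_nonneg (Matrix.diagonal fun i => (g i)⁻¹))
        linarith
      apply mul_le_mul_of_nonneg_left _ hκ0'
      rw [hsq]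
      exact hSk_ge k
    have h3 : ε * ((∑ i, ∑ k', ((x (k+1)).1 i k' *
          (Real.log ((x (k+1)).1 i k') - Real.log ((x k).1 i k')) -
          (x (k+1)).1 i k' + (x k).1 i k')) +
        (∑ j, ∑ k', ((x (k+1)).2 j k' *
          (Real.log ((x (k+1)).2 j k') - Real.log ((x k).2 j k')) -
          (x (k+1)).2 j k' + (x k).2 j k'))) ≤ ε * Sk k :=
      mul_le_mul_of_nonneg_left hW hε
    have h4 : -((1/γ) * Sk k) = -(2 * L * Sk k) := by rw [hγinv]
    have h5 : (ε + specNorm C * specNorm (Matrix.diagonal fun i => (g i)⁻¹) / 2) * Sk k ≤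
        L * Sk k := mul_le_mul_of_nonneg_right hεκL (hSk0 k)
    linarith [h1, h2, h3, h4, h5, hB]
  -- telescoping
  have htel : ∀ K : ℕ, (∑ k ∈ Finset.range K, L * Sk k) ≤
      fobj C g ε (x 0) - fobj C g ε (x K) := by
    intro K
    induction K with
    | zero => simp
    | succ K' ih =>
        rw [Finset.sum_range_succ]
        have := hstep K'
        linarith
  have hNpos : (0:ℝ) < (N:ℝ) := by
    have : 0 < N := by omega
    exact_mod_cast this
  obtain ⟨k0, hk0mem, hk0min⟩ := Finset.exists_min_image (Finset.range N) Sk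
    ⟨0, Finset.mem_range.2 (by omega)⟩
  have hsum_ge : (N : ℝ) * (L * Sk k0) ≤ ∑ k ∈ Finset.range N, L * Sk k := by
    calc (N:ℝ) * (L * Sk k0) = ∑ _k ∈ Finset.range N, L * Sk k0 := by
          rw [Finset.sum_const, Finset.card_range, nsmul_eq_mul]
      _ ≤ ∑ k ∈ Finset.range N, L * Sk k :=
          Finset.sum_le_sum fun k hk => mul_le_mul_of_nonneg_left (hk0min k hk) hL0
  have hDbound : (N : ℝ) * (L * Sk k0) ≤ D₀ := by
    have hLT := LOT_le ha hb hgpos C hε (hfeas N)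
    have := htel N
    rw [hD₀]
    linarith
  have hLS : L * Sk k0 ≤ D₀ / (N:ℝ) := by
    rw [le_div_iff₀ hNpos]
    linarith [hDbound]
  refine ⟨k0, Finset.mem_range.1 hk0mem, ?_⟩
  -- rewrite the symmetrized KL
  have hmx := flat_mass ha hb (hfeas k0)
  have hmy := flat_mass ha hb (hfeas (k0+1))
  have hKL : pairKL (x k0) (x (k0+1)) + pairKL (x (k0+1)) (x k0) = Sk k0 - 4 := by
    rw [pairKL_flat, pairKL_flat, ← Finset.sum_add_distrib]
    have hptw : ∀ e, flatP (x k0) e *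
        (Real.log (flatP (x k0) e / flatP (x (k0+1)) e) - 1) +
        flatP (x (k0+1)) e * (Real.log (flatP (x (k0+1)) e / flatP (x k0) e) - 1) =
        (flatP (x (k0+1)) e - flatP (x k0) e) *
          (Real.log (flatP (x (k0+1)) e) - Real.log (flatP (x k0) e)) -
          flatP (x k0) e - flatP (x (k0+1)) e := by
      intro e
      rw [Real.log_div (ne_of_gt (hpos k0 e)) (ne_of_gt (hpos (k0+1) e)),
        Real.log_div (ne_of_gt (hpos (k0+1) e)) (ne_of_gt (hpos k0 e))]
      ring
    rw [Finset.sum_congr rfl fun e _ => hptw e, Finset.sum_sub_distrib,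
      Finset.sum_sub_distrib, hmx, hmy, hSkdef]
    ring
  rw [hKL, hγ2]
  have hfin : 4 * L ^ 2 * (Sk k0 - 4) ≤ 4 * L * D₀ / (N:ℝ) := by
    have h5 : 4 * L ^ 2 * (Sk k0 - 4) ≤ 4 * L ^ 2 * Sk k0 := by nlinarith [sq_nonneg L]
    have h6 : 4 * L ^ 2 * Sk k0 = 4 * L * (L * Sk k0) := by ring
    have h7 : 4 * L * (L * Sk k0) ≤ 4 * L * (D₀ / (N:ℝ)) :=
      mul_le_mul_of_nonneg_left hLS (by linarith)
    have h8 : 4 * L * (D₀ / (N:ℝ)) = 4 * L * D₀ / (N:ℝ) := by ring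
    linarith
  linarith [hfin]
end

section
/- Let a ∈ Δ_n^*, b ∈ Δ_m^*, r ≥ 1, and let ξ̃ = (Q̃, R̃, g̃) with Q̃ ∈ ℝ_{>0}^{n×r}, R̃ ∈ ℝ_{>0}^{m×r}, g̃ ∈ ℝ_{>0}^r. Let C̄₁(a,b,r) := {(Q,R,g) ∈ ℝ_{≥0}^{n×r} × ℝ_{≥0}^{m×r} × ℝ_{≥0}^r : Q 1_r = a, R 1_r = b} (the closure of C₁(a,b,r)). Then the unique minimizer of ζ ↦ KL(ζ, ξ̃) over C̄₁(a,b,r) is ( Diag(a/(Q̃ 1_r)) Q̃, Diag(b/(R̃ 1_r)) R̃, g̃ ), where the division is entrywise. -/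
open Matrix Finset Real
open scoped RealInnerProductSpace

private lemma pt_le (x c : ℝ) (hx : 0 ≤ x) (hc : 0 < c) :
    x - c ≤ x * Real.log (x / c) := by
  rcases hx.eq_or_lt with h | h
  · rw [← h]; simp; linarith
  · have h1 : Real.log (c / x) ≤ c / x - 1 :=
      Real.log_le_sub_one_of_pos (div_pos hc h)
    have h2 : Real.log (x / c) = - Real.log (c / x) := by
      rw [← Real.log_inv, inv_div]
    have h4 : x * Real.log (c / x) ≤ x * (c / x - 1) :=
      mul_le_mul_of_nonneg_left h1 h.le
    have h5 : x * (c / x - 1) = c - x := by field_simp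
    rw [h2]; linarith

private lemma pt_lt (x c : ℝ) (hx : 0 ≤ x) (hc : 0 < c) (hne : x ≠ c) :
    x - c < x * Real.log (x / c) := by
  rcases hx.eq_or_lt with h | h
  · rw [← h]; simp; linarith
  · have hne1 : c / x ≠ 1 := by
      intro hcontra
      exact hne ((div_eq_one_iff_eq h.ne').mp hcontra).symm
    have h1 : Real.log (c / x) < c / x - 1 :=
      Real.log_lt_sub_one_of_pos (div_pos hc h) hne1
    have h2 : Real.log (x / c) = - Real.log (c / x) := by
      rw [← Real.log_inv, inv_div]
    have h4 : x * Real.log (c / x) < x * (c / x - 1) :=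
      (mul_lt_mul_iff_right₀ h).mpr h1
    have h5 : x * (c / x - 1) = c - x := by field_simp
    rw [h2]; linarith

private lemma row_main {k : ℕ} (q t c : Fin k → ℝ) (A : ℝ) (hq : ∀ j, 0 ≤ q j)
    (ht : ∀ j, 0 < t j) (hA : 0 < A) (hsum : ∑ j, q j = A)
    (hc_def : ∀ j, c j = A / (∑ l, t l) * t j) :
    (∑ j, c j * (Real.log (c j / t j) - 1) ≤ ∑ j, q j * (Real.log (q j / t j) - 1)) ∧
    ((∃ j, q j ≠ c j) →
      ∑ j, c j * (Real.log (c j / t j) - 1) < ∑ j, q j * (Real.log (q j / t j) - 1)) := by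
  have hne : (Finset.univ : Finset (Fin k)).Nonempty := by
    by_contra h
    rw [Finset.not_nonempty_iff_eq_empty] at h
    rw [h, Finset.sum_empty] at hsum
    linarith
  have hs : 0 < ∑ l, t l := Finset.sum_pos (fun j _ => ht j) hne
  set s : ℝ := ∑ l, t l with hs_def
  have hc : ∀ j, 0 < c j := fun j => by
    rw [hc_def j]; exact mul_pos (div_pos hA hs) (ht j)
  have hcsum : ∑ j, c j = A := by
    calc ∑ j, c j = ∑ j, A / s * t j := by
          exact Finset.sum_congr rfl fun j _ => hc_def j
      _ = A / s * s := by rw [← Finset.mul_sum]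
      _ = A := by field_simp
  have key : ∀ j, q j * (Real.log (q j / t j) - 1)
      = c j * (Real.log (c j / t j) - 1)
        + (q j * Real.log (q j / c j) - (q j - c j)) + (q j - c j) * Real.log (A / s) := by
    intro j
    have htj := (ht j).ne'
    have hct : c j / t j = A / s := by
      rw [hc_def j]; field_simp
    rcases (hq j).eq_or_lt with h0 | h0
    · rw [← h0]; simp [hct]; ring
    · have hlog : Real.log (q j / t j) = Real.log (q j / c j) + Real.log (A / s) := by
        rw [← Real.log_mul (div_pos h0 (hc j)).ne' (div_pos hA hs).ne']
        congr 1
        rw [hc_def j]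
        field_simp
      rw [hlog, hct]; ring
  have hsplit : ∑ j, q j * (Real.log (q j / t j) - 1)
      = (∑ j, c j * (Real.log (c j / t j) - 1))
        + ∑ j, (q j * Real.log (q j / c j) - (q j - c j)) := by
    rw [Finset.sum_congr rfl (fun j _ => key j), Finset.sum_add_distrib,
      Finset.sum_add_distrib]
    have hz : ∑ j, (q j - c j) * Real.log (A / s) = 0 := by
      rw [← Finset.sum_mul, Finset.sum_sub_distrib, hsum, hcsum, sub_self, zero_mul]
    rw [hz, add_zero]
  have hterm_le : ∀ j ∈ Finset.univ, (0:ℝ) ≤ q j * Real.log (q j / c j) - (q j - c j) :=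
    fun j _ => by linarith [pt_le (q j) (c j) (hq j) (hc j)]
  constructor
  · rw [hsplit]
    have : 0 ≤ ∑ j, (q j * Real.log (q j / c j) - (q j - c j)) :=
      Finset.sum_nonneg hterm_le
    linarith
  · rintro ⟨j0, hj0⟩
    rw [hsplit]
    have hpos : 0 < ∑ j, (q j * Real.log (q j / c j) - (q j - c j)) := by
      have := Finset.sum_lt_sum (f := fun _ : Fin k => (0:ℝ))
        (g := fun j => q j * Real.log (q j / c j) - (q j - c j)) hterm_le
        ⟨j0, Finset.mem_univ j0, by linarith [pt_lt (q j0) (c j0) (hq j0) (hc j0) hj0]⟩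
      simpa using this
    linarith

private lemma mat_main {n r : ℕ} (Q Qt C : Mat n r) (a : Fin n → ℝ)
    (hQ : ∀ i j, 0 ≤ Q i j) (hQt : ∀ i j, 0 < Qt i j) (ha : ∀ i, 0 < a i)
    (hrow : ∀ i, ∑ j, Q i j = a i)
    (hC : ∀ i j, C i j = a i / (∑ k, Qt i k) * Qt i j) :
    matKL C Qt ≤ matKL Q Qt ∧ (Q ≠ C → matKL C Qt < matKL Q Qt) := by
  have hrows : ∀ i, (∑ j, C i j * (Real.log (C i j / Qt i j) - 1)
        ≤ ∑ j, Q i j * (Real.log (Q i j / Qt i j) - 1)) ∧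
      ((∃ j, Q i j ≠ C i j) →
        ∑ j, C i j * (Real.log (C i j / Qt i j) - 1)
          < ∑ j, Q i j * (Real.log (Q i j / Qt i j) - 1)) := fun i =>
    row_main (Q i) (Qt i) (C i) (a i) (hQ i) (hQt i) (ha i) (hrow i) (hC i)
  unfold matKL
  constructor
  · exact Finset.sum_le_sum fun i _ => (hrows i).1
  · intro hne
    have : ∃ i j, Q i j ≠ C i j := by
      by_contra h
      push_neg at h
      exact hne (by ext i j; exact h i j)
    obtain ⟨i0, j0, hij⟩ := this
    exact Finset.sum_lt_sum (fun i _ => (hrows i).1)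
      ⟨i0, Finset.mem_univ i0, (hrows i0).2 ⟨j0, hij⟩⟩

private lemma vec_main {r : ℕ} (g gt : Fin r → ℝ) (hg : ∀ i, 0 ≤ g i)
    (hgt : ∀ i, 0 < gt i) :
    vecKL gt gt ≤ vecKL g gt ∧ (g ≠ gt → vecKL gt gt < vecKL g gt) := by
  have hterm : ∀ i, gt i * (Real.log (gt i / gt i) - 1) = - gt i := fun i => by
    rw [div_self (hgt i).ne', Real.log_one]; ring
  have hle : ∀ i ∈ Finset.univ, gt i * (Real.log (gt i / gt i) - 1)
      ≤ g i * (Real.log (g i / gt i) - 1) := fun i _ => by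
    have := pt_le (g i) (gt i) (hg i) (hgt i)
    rw [hterm i]; nlinarith
  unfold vecKL
  constructor
  · exact Finset.sum_le_sum hle
  · intro hne
    have : ∃ i, g i ≠ gt i := by
      by_contra h
      push_neg at h
      exact hne (funext h)
    obtain ⟨i0, hi0⟩ := this
    refine Finset.sum_lt_sum hle ⟨i0, Finset.mem_univ i0, ?_⟩
    have := pt_lt (g i0) (gt i0) (hg i0) (hgt i0) hi0
    rw [hterm i0]; nlinarith

/-- KL projection onto the closure `𝒞̄₁(a,b,r)`: the unique minimizer
of `ζ ↦ KL(ζ, (Q̃,R̃,g̃))` over `𝒞̄₁(a,b,r)` is `(Diag(a/(Q̃1)) Q̃, Diag(b/(R̃1)) R̃, g̃)`. -/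
theorem KL_projection_C1bar {n m : ℕ} (r : ℕ) (hr : 1 ≤ r)
    (a : Fin n → ℝ) (ha : a ∈ posSimplex n)
    (b : Fin m → ℝ) (hb : b ∈ posSimplex m)
    (Qt : Mat n r) (hQt : ∀ i j, 0 < Qt i j)
    (Rt : Mat m r) (hRt : ∀ i j, 0 < Rt i j)
    (gt : Fin r → ℝ) (hgt : ∀ i, 0 < gt i)
    (cand : LRTriple n m r)
    (hcand : cand =
      (Matrix.of fun i j => a i / (∑ k, Qt i k) * Qt i j,
       Matrix.of fun i j => b i / (∑ k, Rt i k) * Rt i j,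
       gt)) :
    cand ∈ C1barSet a b r ∧
      ∀ ζ ∈ C1barSet a b r, ζ ≠ cand →
        tripleKL cand (Qt, Rt, gt) < tripleKL ζ (Qt, Rt, gt) := by
  obtain ⟨ha1, ha2⟩ := ha
  obtain ⟨hb1, hb2⟩ := hb
  have hrne : (Finset.univ : Finset (Fin r)).Nonempty := ⟨⟨0, hr⟩, Finset.mem_univ _⟩
  have hsQ : ∀ i, 0 < ∑ k, Qt i k := fun i => Finset.sum_pos (fun k _ => hQt i k) hrne
  have hsR : ∀ i, 0 < ∑ k, Rt i k := fun i => Finset.sum_pos (fun k _ => hRt i k) hrne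
  subst hcand
  have hmem : (⟨Matrix.of fun i j => a i / (∑ k, Qt i k) * Qt i j,
      Matrix.of fun i j => b i / (∑ k, Rt i k) * Rt i j, gt⟩ : LRTriple n m r)
      ∈ C1barSet a b r := by
    refine ⟨fun i j => ?_, fun i j => ?_, fun i => (hgt i).le, fun i => ?_, fun i => ?_⟩
    · exact mul_nonneg (div_nonneg (ha1 i).le (hsQ i).le) (hQt i j).le
    · exact mul_nonneg (div_nonneg (hb1 i).le (hsR i).le) (hRt i j).le
    · show ∑ j, a i / (∑ k, Qt i k) * Qt i j = a i
      rw [← Finset.mul_sum]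
      field_simp
      rw [mul_div_assoc, div_self (hsQ i).ne', mul_one]
    · show ∑ j, b i / (∑ k, Rt i k) * Rt i j = b i
      rw [← Finset.mul_sum]
      field_simp
      rw [mul_div_assoc, div_self (hsR i).ne', mul_one]
  refine ⟨hmem, ?_⟩
  rintro ⟨Q, R, g⟩ ⟨hQ, hR, hg, hQrow, hRrow⟩ hne
  have m1 := mat_main Q Qt (Matrix.of fun i j => a i / (∑ k, Qt i k) * Qt i j) a
    hQ hQt ha1 hQrow (fun i j => rfl)
  have m2 := mat_main R Rt (Matrix.of fun i j => b i / (∑ k, Rt i k) * Rt i j) b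
    hR hRt hb1 hRrow (fun i j => rfl)
  have m3 := vec_main g gt hg hgt
  simp only [Prod.mk.injEq, not_and, ne_eq] at hne
  show matKL _ Qt + matKL _ Rt + vecKL gt gt < matKL Q Qt + matKL R Rt + vecKL g gt
  by_cases h1 : Q = Matrix.of fun i j => a i / (∑ k, Qt i k) * Qt i j
  · by_cases h2 : R = Matrix.of fun i j => b i / (∑ k, Rt i k) * Rt i j
    · have h3 : g ≠ gt := by
        intro h3
        exact hne h1 h2 h3
      linarith [m1.1, m2.1, m3.2 h3]
    · linarith [m1.1, m2.2 h2, m3.1]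
  · linarith [m1.2 h1, m2.1, m3.1]
end
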